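/- Let n ≥ 2 and let C ⊆ 2^{[n]} be an intersection complete code containing at least one nonempty codeword, and let d + 1 be the maximum cardinality of a codeword of C (i.e. d = dim Δ(C)). Then C has a closed convex realization in ℝ^m, where m = min{2d+1, n−1}. -/

import Mathlib

/-- The combinatorial code of a collection of sets `U` in `X`: the set of
all `σ ⊆ [n]` such that some point `x ∈ X` lies in exactly the `U i` with `i ∈ σ`. -/
def codeOf {n : ℕ} {X : Type*} (U : Fin n → Set X) : Set (Finset (Fin n)) :=
  {σ | ∃ x : X, ∀ i, i ∈ σ ↔ x ∈ U i}

/-- `C` has a realization by convex closed sets in `ℝ^d`. -/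
def HasClosedRealization (n : ℕ) (C : Set (Finset (Fin n))) (d : ℕ) : Prop :=
  ∃ U : Fin n → Set (EuclideanSpace ℝ (Fin d)),
    (∀ i, Convex ℝ (U i)) ∧ (∀ i, IsClosed (U i)) ∧ codeOf U = C

set_option maxHeartbeats 1000000

lemma inter_mem {n : ℕ} {α : Type*} (C : Set (Finset (Fin n)))
    (hIC : ∀ c₁ ∈ C, ∀ c₂ ∈ C, c₁ ∩ c₂ ∈ C)
    (t : Finset α) (ht : t.Nonempty) (c : α → Finset (Fin n))
    (hc : ∀ l ∈ t, c l ∈ C) :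
    ∃ e ∈ C, ∀ i, i ∈ e ↔ ∀ l ∈ t, i ∈ c l := by
  induction ht using Finset.Nonempty.cons_induction with
  | singleton a => exact ⟨c a, hc a (by simp), by simp⟩
  | cons a s ha hs ih =>
    obtain ⟨e, heC, he⟩ := ih (fun l hl => hc l (Finset.mem_cons_of_mem hl))
    refine ⟨c a ∩ e, hIC _ (hc a (Finset.mem_cons_self a s)) _ heC, ?_⟩
    intro i
    simp [Finset.mem_cons, he, or_imp, forall_and]

lemma persp_convex {V W : Type*} [AddCommGroup V] [Module ℝ V] [AddCommGroup W] [Module ℝ W]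
    (φ : V →ₗ[ℝ] ℝ) (A : V →ₗ[ℝ] W) (v : V) (S : Set V) (hS : Convex ℝ S)
    (hpos : ∀ p ∈ S, 0 < φ (p - v)) :
    Convex ℝ ((fun p => (φ (p - v))⁻¹ • A (p - v)) '' S) := by
  rintro _ ⟨p, hp, rfl⟩ _ ⟨q, hq, rfl⟩ α γ hα hγ hαγ
  have ha : 0 < φ (p - v) := hpos p hp
  have hb : 0 < φ (q - v) := hpos q hq
  set a := φ (p - v) with hadef
  set b := φ (q - v) with hbdef
  set s := α * b + γ * a with hsdef
  have hs : 0 < s := by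
    rcases eq_or_lt_of_le hα with h|h
    · have hγ1 : γ = 1 := by linarith
      rw [hsdef, ← h, hγ1]; simpa using ha
    · nlinarith [mul_nonneg hγ ha.le, mul_pos h hb]
  have hcoeff : α * b / s + γ * a / s = 1 := by field_simp; exact hsdef.symm
  refine ⟨(α * b / s) • p + (γ * a / s) • q,
    hS hp hq (by positivity) (by positivity) hcoeff, ?_⟩
  have hxv : (α * b / s) • p + (γ * a / s) • q - v
      = (α * b / s) • (p - v) + (γ * a / s) • (q - v) := by
    rw [smul_sub, smul_sub,
      show (α * b / s) • p - (α * b / s) • v + ((γ * a / s) • q - (γ * a / s) • v)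
        = (α * b / s) • p + (γ * a / s) • q - ((α * b / s) • v + (γ * a / s) • v) by abel,
      ← add_smul, hcoeff, one_smul]
  simp only [hxv, map_add, map_smul, smul_eq_mul]
  rw [← hadef, ← hbdef,
    show α * b / s * a + γ * a / s * b = a * b / s by field_simp; linear_combination hαγ]
  rw [smul_add, smul_smul, smul_smul, smul_smul, smul_smul]
  congr 1
  · congr 1
    field_simp
  · congr 1
    field_simp

lemma master {n m : ℕ} (hm : 0 < m) (C : Set (Finset (Fin n)))
    (hempty : ∅ ∈ C)
    (hIC : ∀ c₁ ∈ C, ∀ c₂ ∈ C, c₁ ∩ c₂ ∈ C)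
    (x : Finset (Fin n) → EuclideanSpace ℝ (Fin (m+1)))
    (L : Fin n → EuclideanSpace ℝ (Fin (m+1)) →ₗ[ℝ] ℝ) (β : Fin n → ℝ)
    (φ : EuclideanSpace ℝ (Fin (m+1)) →ₗ[ℝ] ℝ)
    (A : EuclideanSpace ℝ (Fin (m+1)) →ₗ[ℝ] EuclideanSpace ℝ (Fin m))
    (v : EuclideanSpace ℝ (Fin (m+1)))
    (hnn : ∀ c ∈ C, c ≠ ∅ → ∀ i, 0 ≤ L i (x c) + β i)
    (hzero : ∀ c ∈ C, c ≠ ∅ → ∀ i, (L i (x c) + β i = 0 ↔ i ∈ c))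
    (hv : ∀ i, 0 < L i v + β i)
    (hφ : ∀ c ∈ C, c ≠ ∅ → 0 < φ (x c - v))
    (hker : ∀ w, A w = 0 → φ w = 0 → w = 0) :
    HasClosedRealization n C m := by
  classical
  let X : Set (EuclideanSpace ℝ (Fin (m+1))) := x '' {c | c ∈ C ∧ c ≠ ∅}
  let P : Set (EuclideanSpace ℝ (Fin (m+1))) := convexHull ℝ X
  let G : Fin n → EuclideanSpace ℝ (Fin (m+1)) → ℝ := fun i p => L i p + β i
  have hGcomb : ∀ i (a b : ℝ) p q, a + b = 1 →
      G i (a • p + b • q) = a * G i p + b * G i q := by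
    intro i a b p q hab
    show L i (a • p + b • q) + β i = a * (L i p + β i) + b * (L i q + β i)
    rw [map_add, map_smul, map_smul]
    simp only [smul_eq_mul]
    have hb : b = 1 - a := by linarith
    subst hb; ring
  have hφcomb : ∀ (a b : ℝ) p q, a + b = 1 →
      φ (a • p + b • q - v) = a * φ (p - v) + b * φ (q - v) := by
    intro a b p q hab
    have h1 : a • p + b • q - v = a • (p - v) + b • (q - v) := by
      rw [smul_sub, smul_sub,
        show a • p - a • v + (b • q - b • v) = a • p + b • q - (a • v + b • v) by abel,
        ← add_smul, hab, one_smul]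
    rw [h1, map_add, map_smul, map_smul, smul_eq_mul, smul_eq_mul]
  have hPG : ∀ i, ∀ p ∈ P, 0 ≤ G i p := by
    intro i p hp
    have hsub : P ⊆ {p | 0 ≤ G i p} := by
      apply convexHull_min
      · rintro _ ⟨c, ⟨hcC, hc0⟩, rfl⟩
        exact hnn c hcC hc0 i
      · intro p hp q hq a b ha hb hab
        simp only [Set.mem_setOf_eq] at hp hq ⊢
        rw [hGcomb i a b p q hab]
        nlinarith [mul_nonneg ha hp, mul_nonneg hb hq]
    exact hsub hp
  have hPφ : ∀ p ∈ P, 0 < φ (p - v) := by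
    intro p hp
    have hsub : P ⊆ {p | 0 < φ (p - v)} := by
      apply convexHull_min
      · rintro _ ⟨c, ⟨hcC, hc0⟩, rfl⟩
        exact hφ c hcC hc0
      · intro p hp q hq a b ha hb hab
        simp only [Set.mem_setOf_eq] at hp hq ⊢
        rw [hφcomb a b p q hab]
        rcases eq_or_lt_of_le ha with h|h
        · have hb1 : b = 1 := by linarith
          rw [← h, hb1]; simpa using hq
        · nlinarith [mul_nonneg hb hq.le, mul_pos h hp]
    exact hsub hp
  -- the perspective projection
  let pr : EuclideanSpace ℝ (Fin (m+1)) → EuclideanSpace ℝ (Fin m) :=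
    fun p => (φ (p - v))⁻¹ • A (p - v)
  -- injectivity of pr on points of P where some G vanishes
  have hinj : ∀ p ∈ P, ∀ q ∈ P, (∃ i, G i p = 0) → (∃ j, G j q = 0) →
      pr p = pr q → p = q := by
    intro p hp q hq ⟨i, hi⟩ ⟨j, hj⟩ heq
    have ha : 0 < φ (p - v) := hPφ p hp
    have hb : 0 < φ (q - v) := hPφ q hq
    set a := φ (p - v) with hadef
    set b := φ (q - v) with hbdef
    -- derive b • (p - v) = a • (q - v)
    have hA : A (b • (p - v) - a • (q - v)) = 0 := by
      have h1 : a⁻¹ • A (p - v) = b⁻¹ • A (q - v) := heq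
      have h2 : A (p - v) = (a * b⁻¹) • A (q - v) := by
        have := congrArg (fun z => a • z) h1
        simpa [smul_smul, mul_inv_cancel₀ ha.ne', mul_comm] using this
      rw [map_sub, map_smul, map_smul, h2, smul_smul,
        show b * (a * b⁻¹) = a by field_simp, sub_self]
    have hφ0 : φ (b • (p - v) - a • (q - v)) = 0 := by
      rw [map_sub, map_smul, map_smul, smul_eq_mul, smul_eq_mul,
        ← hadef, ← hbdef, mul_comm, sub_self]
    have hkey : b • (p - v) = a • (q - v) := by
      have := hker _ hA hφ0
      rwa [sub_eq_zero] at this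
    rcases lt_trichotomy a b with hab | hab | hab
    · -- a < b : p is the closer point, use i
      exfalso
      set ρ := a / b with hρdef
      have hρ1 : ρ < 1 := (div_lt_one hb).2 hab
      have hρ0 : 0 < ρ := div_pos ha hb
      have hpv : p = (1 - ρ) • v + ρ • q := by
        have h3 : p - v = ρ • (q - v) := by
          have := congrArg (fun z => b⁻¹ • z) hkey
          simpa [smul_smul, inv_mul_cancel₀ hb.ne', hρdef, div_eq_inv_mul] using this
        have : p = v + ρ • (q - v) := by
          rw [← h3]; abel
        rw [this, smul_sub, sub_smul, one_smul]; abel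
      have : G i p = (1 - ρ) * G i v + ρ * G i q := by
        rw [hpv]; exact hGcomb i (1 - ρ) ρ v q (by ring)
      have hGv : 0 < G i v := hv i
      have hGq : 0 ≤ G i q := hPG i q hq
      nlinarith [hi, this]
    · -- a = b
      have hsub : p - v = q - v := by
        apply smul_right_injective _ hb.ne'
        rw [hab] at hkey
        exact hkey
      exact sub_left_injective hsub
    · -- b < a : q is the closer point, use j
      exfalso
      set ρ := b / a with hρdef
      have hρ1 : ρ < 1 := (div_lt_one ha).2 hab
      have hρ0 : 0 < ρ := div_pos hb ha
      have hqv : q = (1 - ρ) • v + ρ • p := by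
        have h3 : q - v = ρ • (p - v) := by
          have := congrArg (fun z => a⁻¹ • z) hkey.symm
          simpa [smul_smul, inv_mul_cancel₀ ha.ne', hρdef, div_eq_inv_mul] using this
        have : q = v + ρ • (p - v) := by
          rw [← h3]; abel
        rw [this, smul_sub, sub_smul, one_smul]; abel
      have : G j q = (1 - ρ) * G j v + ρ * G j p := by
        rw [hqv]; exact hGcomb j (1 - ρ) ρ v p (by ring)
      have hGv : 0 < G j v := hv j
      have hGp : 0 ≤ G j p := hPG j p hp
      nlinarith [hj, this]
  -- the realization in dimension m+1 and its image
  let U : Fin n → Set (EuclideanSpace ℝ (Fin (m+1))) := fun i => P ∩ {p | G i p = 0}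
  let U' : Fin n → Set (EuclideanSpace ℝ (Fin m)) := fun i => pr '' U i
  have hUP : ∀ i, U i ⊆ P := fun i => Set.inter_subset_left
  have hUconv : ∀ i, Convex ℝ (U i) := by
    intro i
    apply (convex_convexHull ℝ X).inter
    intro p hp q hq a b ha hb hab
    simp only [Set.mem_setOf_eq] at hp hq ⊢
    rw [hGcomb i a b p q hab, hp, hq]
    ring
  have hU'conv : ∀ i, Convex ℝ (U' i) :=
    fun i => persp_convex φ A v (U i) (hUconv i) (fun p hp => hPφ p (hUP i hp))
  have hXfin : X.Finite := Set.Finite.image x (Set.toFinite {c | c ∈ C ∧ c ≠ ∅})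
  have hPcomp : IsCompact P := hXfin.isCompact_convexHull ℝ
  have hGcont : ∀ i, Continuous (G i) := by
    intro i
    exact ((L i).continuous_of_finiteDimensional).add continuous_const
  have hUcomp : ∀ i, IsCompact (U i) := by
    intro i
    exact hPcomp.inter_right (isClosed_eq (hGcont i) continuous_const)
  have hprcont : ContinuousOn pr P := by
    have h1 : Continuous fun p => φ (p - v) :=
      (φ.continuous_of_finiteDimensional).comp (continuous_id.sub continuous_const)
    have h2 : Continuous fun p => A (p - v) :=
      (A.continuous_of_finiteDimensional).comp (continuous_id.sub continuous_const)
    exact ContinuousOn.smul ((h1.continuousOn).inv₀ (fun p hp => (hPφ p hp).ne'))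
      h2.continuousOn
  have hU'comp : ∀ i, IsCompact (U' i) := by
    intro i
    have h := (hUcomp i).image_of_continuousOn (hprcont.mono (hUP i))
    exact h
  have hU'closed : ∀ i, IsClosed (U' i) := by
    intro i
    have h := ((hUcomp i).image_of_continuousOn (hprcont.mono (hUP i))).isClosed
    exact h
  -- affine evaluation on convex combinations
  have hGsum : ∀ i (t : Finset (EuclideanSpace ℝ (Fin (m+1)))) (w : EuclideanSpace ℝ (Fin (m+1)) → ℝ),
      (∑ y ∈ t, w y) = 1 → G i (∑ y ∈ t, w y • y) = ∑ y ∈ t, w y * G i y := by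
    intro i t w hw1
    have h1 : L i (∑ y ∈ t, w y • y) = ∑ y ∈ t, w y * L i y := by
      rw [map_sum]
      apply Finset.sum_congr rfl
      intro y hy
      rw [map_smul, smul_eq_mul]
    have h2 : ∑ y ∈ t, w y * G i y = (∑ y ∈ t, w y * L i y) + (∑ y ∈ t, w y) * β i := by
      rw [Finset.sum_mul, ← Finset.sum_add_distrib]
      apply Finset.sum_congr rfl
      intro y hy
      show w y * (L i y + β i) = _
      ring
    show L i (∑ y ∈ t, w y • y) + β i = _
    rw [h1, h2, hw1, one_mul]
  -- the codeword of any point of P is an intersection of codewords, hence in C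
  have hσmem : ∀ p₀ ∈ P, ∃ e ∈ C, ∀ i, (G i p₀ = 0 ↔ i ∈ e) := by
    intro p₀ hp₀
    have hXF : p₀ ∈ convexHull ℝ (hXfin.toFinset : Set (EuclideanSpace ℝ (Fin (m+1)))) := by
      rwa [hXfin.coe_toFinset]
    rw [Finset.convexHull_eq] at hXF
    obtain ⟨w, hw0, hw1, hwc⟩ := hXF
    rw [Finset.centerMass_eq_of_sum_1 _ id hw1] at hwc
    simp only [id] at hwc
    set t' := hXfin.toFinset.filter (fun y => w y ≠ 0) with ht'def
    have hsubW : ∑ y ∈ t', w y = 1 := by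
      rw [ht'def, Finset.sum_filter_of_ne (fun y _ h => h), hw1]
    have hsubP : ∑ y ∈ t', w y • y = p₀ := by
      rw [ht'def, Finset.sum_filter_of_ne, hwc]
      intro y _ h
      by_contra h0
      exact h (by rw [h0, zero_smul])
    have ht'ne : t'.Nonempty := by
      by_contra h
      rw [Finset.not_nonempty_iff_eq_empty] at h
      rw [h, Finset.sum_empty] at hsubW
      norm_num at hsubW
    -- pick codewords for the support points
    have hcw : ∀ y ∈ t', ∃ c, (c ∈ C ∧ c ≠ ∅) ∧ x c = y := by
      intro y hy
      have : y ∈ X := by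
        have := Finset.mem_filter.mp hy
        exact hXfin.mem_toFinset.mp this.1
      exact this
    let cw : EuclideanSpace ℝ (Fin (m+1)) → Finset (Fin n) := fun y =>
      if h : ∃ c, (c ∈ C ∧ c ≠ ∅) ∧ x c = y then h.choose else ∅
    have hcwC : ∀ y ∈ t', cw y ∈ C ∧ cw y ≠ ∅ ∧ x (cw y) = y := by
      intro y hy
      obtain ⟨c, hc, hxc⟩ := hcw y hy
      have hex : ∃ c, (c ∈ C ∧ c ≠ ∅) ∧ x c = y := ⟨c, hc, hxc⟩
      have h1 := hex.choose_spec
      have hcweq : cw y = hex.choose := dif_pos hex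
      rw [hcweq]
      exact ⟨h1.1.1, h1.1.2, h1.2⟩
    obtain ⟨e, heC, he⟩ := inter_mem C hIC t' ht'ne cw (fun y hy => (hcwC y hy).1)
    refine ⟨e, heC, fun i => ?_⟩
    have hGval : G i p₀ = ∑ y ∈ t', w y * G i y := by
      rw [← hsubP]
      exact hGsum i t' w hsubW
    have hterm : ∀ y ∈ t', 0 ≤ w y * G i y := by
      intro y hy
      have hy' : y ∈ hXfin.toFinset := (Finset.mem_filter.mp hy).1
      have hyX : y ∈ X := hXfin.mem_toFinset.mp hy'
      have hyP : y ∈ P := subset_convexHull ℝ X hyX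
      exact mul_nonneg (hw0 y hy') (hPG i y hyP)
    rw [hGval, Finset.sum_eq_zero_iff_of_nonneg hterm, he i]
    constructor
    · intro h y hy
      have hw : w y ≠ 0 := (Finset.mem_filter.mp hy).2
      have := h y hy
      have hGy : G i y = 0 := by
        rcases mul_eq_zero.mp this with h' | h'
        · exact absurd h' hw
        · exact h'
      obtain ⟨hcwc, hcw0, hcwx⟩ := hcwC y hy
      rw [← hcwx] at hGy
      exact (hzero _ hcwc hcw0 i).mp hGy
    · intro h y hy
      obtain ⟨hcwc, hcw0, hcwx⟩ := hcwC y hy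
      have : G i y = 0 := by
        rw [← hcwx]
        exact (hzero _ hcwc hcw0 i).mpr (h y hy)
      rw [this, mul_zero]
  -- assemble the realization
  refine ⟨U', hU'conv, hU'closed, ?_⟩
  apply Set.ext
  intro σ
  constructor
  · rintro ⟨y, hy⟩
    by_cases hall : ∀ i, y ∉ U' i
    · have hσ : σ = ∅ := by
        apply Finset.eq_empty_of_forall_notMem
        intro i hi
        exact hall i ((hy i).mp hi)
      rw [hσ]
      exact hempty
    · push_neg at hall
      obtain ⟨i₀, hi₀⟩ := hall
      obtain ⟨p₀, hp₀U, hp₀e⟩ := hi₀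
      have hiff : ∀ i, y ∈ U' i ↔ G i p₀ = 0 := by
        intro i
        constructor
        · rintro ⟨q, hqU, hqe⟩
          have hqp : q = p₀ :=
            hinj q hqU.1 p₀ hp₀U.1 ⟨i, hqU.2⟩ ⟨i₀, hp₀U.2⟩ (hqe.trans hp₀e.symm)
          rw [← hqp]
          exact hqU.2
        · intro h
          exact ⟨p₀, ⟨hp₀U.1, h⟩, hp₀e⟩
      obtain ⟨e, heC, he⟩ := hσmem p₀ hp₀U.1
      have hσe : σ = e := by
        apply Finset.ext
        intro i
        rw [hy i, hiff i, he i]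
      rw [hσe]
      exact heC
  · intro hσC
    by_cases hσ0 : σ = ∅
    · -- a point outside all the images
      haveI : Nonempty (Fin m) := ⟨⟨0, hm⟩⟩
      have hK : IsCompact (⋃ i, U' i) := isCompact_iUnion hU'comp
      have hne := hK.ne_univ
      obtain ⟨y₀, hy₀⟩ := (Set.ne_univ_iff_exists_notMem _).mp hne
      refine ⟨y₀, fun i => ?_⟩
      rw [hσ0]
      simp only [Finset.notMem_empty, false_iff]
      intro h
      exact hy₀ (Set.mem_iUnion.mpr ⟨i, h⟩)
    · -- the image of the codeword's point
      have hxP : x σ ∈ P := subset_convexHull ℝ X ⟨σ, ⟨hσC, hσ0⟩, rfl⟩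
      obtain ⟨j, hj⟩ := Finset.nonempty_iff_ne_empty.mpr hσ0
      refine ⟨pr (x σ), fun i => ?_⟩
      constructor
      · intro hiσ
        exact ⟨x σ, ⟨hxP, (hzero σ hσC hσ0 i).mpr hiσ⟩, rfl⟩
      · rintro ⟨q, hqU, hqe⟩
        have hqx : q = x σ :=
          hinj q hqU.1 (x σ) hxP ⟨i, hqU.2⟩ ⟨j, (hzero σ hσC hσ0 j).mpr hj⟩ hqe
        rw [hqx] at hqU
        exact (hzero σ hσC hσ0 i).mp hqU.2

lemma schemeA {n : ℕ} (hn : 2 ≤ n) (C : Set (Finset (Fin n)))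
    (hempty : ∅ ∈ C)
    (hIC : ∀ c₁ ∈ C, ∀ c₂ ∈ C, c₁ ∩ c₂ ∈ C) :
    HasClosedRealization n C (n-1) := by
  classical
  have hm1 : (n-1)+1 = n := by omega
  let ee : Fin ((n-1)+1) → Fin n := Fin.cast hm1
  let se : Fin n → Fin ((n-1)+1) := Fin.cast hm1.symm
  have hese : ∀ i, ee (se i) = i := by
    intro i; simp [ee, se]
  refine master (by omega) C hempty hIC
    (fun c => WithLp.toLp 2 (fun k : Fin ((n-1)+1) => if ee k ∈ c then (1:ℝ) else 0))
    (fun i => { toFun := fun p => -(p (se i)),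
                map_add' := by intro p q; show -((p+q) (se i)) = _; simp [PiLp.add_apply]; ring,
                map_smul' := by intro c p; show -((c • p) (se i)) = _; simp [PiLp.smul_apply] })
    (fun _ => 1)
    { toFun := fun p => ∑ k, p k,
      map_add' := by intro p q; simp [PiLp.add_apply, Finset.sum_add_distrib],
      map_smul' := by intro c p; simp [PiLp.smul_apply, Finset.mul_sum] }
    { toFun := fun p => WithLp.toLp 2 (fun k => p (Fin.castSucc k)),
      map_add' := by intro p q; rfl,
      map_smul' := by intro c p; rfl }
    (WithLp.toLp 2 (fun _ => (-1:ℝ)))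
    ?_ ?_ ?_ ?_ ?_
  · intro c hc hc0 i
    show 0 ≤ -(if ee (se i) ∈ c then (1:ℝ) else 0) + 1
    rw [hese i]
    split <;> norm_num
  · intro c hc hc0 i
    show -(if ee (se i) ∈ c then (1:ℝ) else 0) + 1 = 0 ↔ i ∈ c
    rw [hese i]
    split <;> simp_all
  · intro i
    show (0:ℝ) < -(-1) + 1
    norm_num
  · intro c hc hc0
    show (0:ℝ) < ∑ k : Fin ((n-1)+1), _
    apply Finset.sum_pos ?_ Finset.univ_nonempty
    intro k _
    simp only [PiLp.sub_apply]
    split <;> norm_num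
  · intro w hA hφ0
    have hcast : ∀ k : Fin (n-1), w (Fin.castSucc k) = 0 := by
      intro k
      have := congrFun (congrArg WithLp.ofLp hA) k
      exact this
    have hlast : w (Fin.last (n-1)) = 0 := by
      have : (∑ k, w k) = 0 := hφ0
      rwa [Fin.sum_univ_castSucc, Finset.sum_eq_zero (fun k _ => hcast k), zero_add] at this
    ext j
    rcases Fin.lastCases (motive := fun j => w j = 0) hlast hcast j with h
    exact h

lemma one_lt_prod_aux {α : Type*} (s : Finset α) (hs : s.Nonempty) (f : α → ℝ)
    (hf : ∀ a ∈ s, 1 < f a) : 1 < ∏ a ∈ s, f a := by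
  induction hs using Finset.Nonempty.cons_induction with
  | singleton a => simpa using hf a (by simp)
  | cons a s ha hsne ih =>
    rw [Finset.prod_cons]
    have h1 : 1 < f a := hf a (Finset.mem_cons_self a s)
    have h2 : 1 < ∏ x ∈ s, f x := ih (fun b hb => hf b (Finset.mem_cons_of_mem hb))
    nlinarith

lemma schemeB {n d : ℕ} (C : Set (Finset (Fin n)))
    (hempty : ∅ ∈ C)
    (hIC : ∀ c₁ ∈ C, ∀ c₂ ∈ C, c₁ ∩ c₂ ∈ C)
    (hub : ∀ c ∈ C, c.card ≤ d + 1) :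
    HasClosedRealization n C (2*d+1) := by
  classical
  let t : Fin n → ℝ := fun i => (i:ℕ) + 1
  have ht0 : ∀ i, (0:ℝ) < t i := by
    intro i
    have : (0:ℝ) ≤ ((i:ℕ):ℝ) := Nat.cast_nonneg _
    simp only [t]
    linarith
  have htinj : Function.Injective t := by
    intro i j h
    simp only [t] at h
    have : ((i:ℕ):ℝ) = ((j:ℕ):ℝ) := by linarith
    exact Fin.ext (Nat.cast_injective this)
  let q : Finset (Fin n) → Polynomial ℝ :=
    fun c => ∏ ℓ ∈ c, ((1:Polynomial ℝ) - Polynomial.C (t ℓ)⁻¹ * Polynomial.X)^2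
  have hqeval : ∀ c (s : ℝ), (q c).eval s = ∏ ℓ ∈ c, (1 - (t ℓ)⁻¹ * s)^2 := by
    intro c s
    simp [q, Polynomial.eval_prod]
  have hq0 : ∀ c, (q c).coeff 0 = 1 := by
    intro c
    rw [Polynomial.coeff_zero_eq_eval_zero, hqeval]
    simp
  have hqdeg : ∀ c ∈ C, (q c).natDegree < (2*d+1+1) + 1 := by
    intro c hc
    have h1 : (q c).natDegree ≤ ∑ ℓ ∈ c, (((1:Polynomial ℝ) - Polynomial.C (t ℓ)⁻¹ * Polynomial.X)^2).natDegree :=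
      Polynomial.natDegree_prod_le _ _
    have h2 : ∀ ℓ ∈ c, (((1:Polynomial ℝ) - Polynomial.C (t ℓ)⁻¹ * Polynomial.X)^2).natDegree ≤ 2 := by
      intro ℓ _
      refine le_trans (Polynomial.natDegree_pow_le) ?_
      have h3 : ((1:Polynomial ℝ) - Polynomial.C (t ℓ)⁻¹ * Polynomial.X).natDegree ≤ 1 := by
        refine le_trans (Polynomial.natDegree_sub_le _ _) ?_
        simp only [Polynomial.natDegree_one]
        have := Polynomial.natDegree_C_mul_le ((t ℓ)⁻¹) Polynomial.X
        simp only [Polynomial.natDegree_X] at this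
        omega
      omega
    have h4 : ∑ ℓ ∈ c, (((1:Polynomial ℝ) - Polynomial.C (t ℓ)⁻¹ * Polynomial.X)^2).natDegree ≤ 2 * c.card := by
      have h4a : ∑ ℓ ∈ c, (((1:Polynomial ℝ) - Polynomial.C (t ℓ)⁻¹ * Polynomial.X)^2).natDegree
          ≤ ∑ _ℓ ∈ c, 2 := Finset.sum_le_sum h2
      have h4b : ∑ _ℓ ∈ c, 2 = 2 * c.card := by rw [Finset.sum_const, smul_eq_mul, mul_comm]
      omega
    have h5 := hub c hc
    omega
  have hkey : ∀ c ∈ C, ∀ s : ℝ, (q c).eval s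
      = 1 + ∑ k : Fin (2*d+1+1), (q c).coeff ((k:ℕ)+1) * s^((k:ℕ)+1) := by
    intro c hc s
    rw [Polynomial.eval_eq_sum_range' (hqdeg c hc), Finset.sum_range_succ']
    rw [hq0, pow_zero, one_mul]
    rw [Fin.sum_univ_eq_sum_range (fun k => (q c).coeff (k+1) * s^(k+1)) (2*d+1+1)]
    ring
  refine master (by omega) C hempty hIC
    (fun c => WithLp.toLp 2 (fun k : Fin (2*d+1+1) => (q c).coeff ((k:ℕ)+1)))
    (fun i => { toFun := fun p => ∑ k, p k * (t i)^((k:ℕ)+1),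
                map_add' := by
                  intro p q
                  simp [PiLp.add_apply, add_mul, Finset.sum_add_distrib],
                map_smul' := by
                  intro c p
                  simp [PiLp.smul_apply, Finset.mul_sum, mul_assoc] })
    (fun _ => 1)
    { toFun := fun p => ∑ k, p k * (-1:ℝ)^((k:ℕ)+1),
      map_add' := by
        intro p q
        simp [PiLp.add_apply, add_mul, Finset.sum_add_distrib],
      map_smul' := by
        intro c p
        simp [PiLp.smul_apply, Finset.mul_sum, mul_assoc] }
    { toFun := fun p => WithLp.toLp 2 (fun k => p (Fin.castSucc k)),
      map_add' := by intro p q; rfl,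
      map_smul' := by intro c p; rfl }
    0
    ?_ ?_ ?_ ?_ ?_
  · -- nonneg
    intro c hc hc0 i
    have : (∑ k : Fin (2*d+1+1), (q c).coeff ((k:ℕ)+1) * (t i)^((k:ℕ)+1)) + 1
        = (q c).eval (t i) := by
      rw [hkey c hc (t i)]; ring
    show 0 ≤ (∑ k : Fin (2*d+1+1), (q c).coeff ((k:ℕ)+1) * (t i)^((k:ℕ)+1)) + 1
    rw [this, hqeval]
    apply Finset.prod_nonneg
    intro ℓ _
    positivity
  · -- zero iff membership
    intro c hc hc0 i
    have heq : (∑ k : Fin (2*d+1+1), (q c).coeff ((k:ℕ)+1) * (t i)^((k:ℕ)+1)) + 1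
        = (q c).eval (t i) := by
      rw [hkey c hc (t i)]; ring
    show (∑ k : Fin (2*d+1+1), (q c).coeff ((k:ℕ)+1) * (t i)^((k:ℕ)+1)) + 1 = 0 ↔ i ∈ c
    rw [heq, hqeval, Finset.prod_eq_zero_iff]
    constructor
    · rintro ⟨ℓ, hℓ, hz⟩
      have h1 : 1 - (t ℓ)⁻¹ * t i = 0 := by
        have := sq_eq_zero_iff.mp hz
        exact this
      have h2 : t i = t ℓ := by
        have hℓ0 := (ht0 ℓ).ne'
        field_simp at h1
        linarith
      rwa [htinj h2]
    · intro hi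
      refine ⟨i, hi, ?_⟩
      rw [sq_eq_zero_iff]
      have := (ht0 i).ne'
      field_simp; norm_num
  · -- positivity at v = 0
    intro i
    show (0:ℝ) < (∑ k : Fin (2*d+1+1), (0:EuclideanSpace ℝ (Fin (2*d+1+1))) k * (t i)^((k:ℕ)+1)) + 1
    simp
  · -- φ positive on generators
    intro c hc hc0
    have heq : (∑ k : Fin (2*d+1+1), (q c).coeff ((k:ℕ)+1) * (-1:ℝ)^((k:ℕ)+1))
        = (q c).eval (-1) - 1 := by
      rw [hkey c hc (-1)]; ring
    have hgt : (1:ℝ) < (q c).eval (-1) := by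
      rw [hqeval]
      apply one_lt_prod_aux
      · exact Finset.nonempty_iff_ne_empty.mpr hc0
      · intro ℓ _
        have h1 : 0 < (t ℓ)⁻¹ := inv_pos.mpr (ht0 ℓ)
        nlinarith
    rw [sub_zero]
    show (0:ℝ) < ∑ k : Fin (2*d+1+1), (q c).coeff ((k:ℕ)+1) * (-1:ℝ)^((k:ℕ)+1)
    rw [heq]
    linarith
  · -- kernel condition
    intro w hA hφ0
    have hcast : ∀ k : Fin (2*d+1), w (Fin.castSucc k) = 0 := by
      intro k
      exact congrFun (congrArg WithLp.ofLp hA) k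
    have hlast : w (Fin.last (2*d+1)) = 0 := by
      have h1 : (∑ k : Fin (2*d+1+1), w k * (-1:ℝ)^((k:ℕ)+1)) = 0 := hφ0
      rw [Fin.sum_univ_castSucc] at h1
      have h2 : ∑ k : Fin (2*d+1), w (Fin.castSucc k) * (-1:ℝ)^(((Fin.castSucc k):ℕ)+1) = 0 :=
        Finset.sum_eq_zero (fun k _ => by rw [hcast k, zero_mul])
      rw [h2, zero_add] at h1
      have h3 : ((Fin.last (2*d+1) : Fin (2*d+1+1)) : ℕ) = 2*d+1 := rfl
      rw [h3] at h1
      have h4 : (-1:ℝ)^(2*d+1+1) = 1 := by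
        have : Even (2*d+1+1) := ⟨d+1, by ring⟩
        exact this.neg_one_pow
      rw [h4, mul_one] at h1
      exact h1
    ext j
    rcases Fin.lastCases (motive := fun j => w j = 0) hlast hcast j with h
    exact h


/-- An intersection complete code on `n ≥ 2` neurons whose largest codeword has
cardinality `d + 1` has a closed convex realization in `ℝ^(min (2d+1) (n-1))`. -/
theorem closedRealization_min_bound {n d : ℕ} (hn : 2 ≤ n)
    (C : Set (Finset (Fin n))) (hempty : ∅ ∈ C)
    (hIC : ∀ c₁ ∈ C, ∀ c₂ ∈ C, c₁ ∩ c₂ ∈ C)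
    (hub : ∀ c ∈ C, c.card ≤ d + 1) (hex : ∃ c ∈ C, c.card = d + 1) :
    HasClosedRealization n C (min (2*d+1) (n-1)) := by
  rcases le_or_gt (n-1) (2*d+1) with h | h
  · rw [min_eq_right h]
    exact schemeA hn C hempty hIC
  · rw [min_eq_left h.le]
    exact schemeB C hempty hIC hub
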